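/- Let (X_j, Y_j, Z_j), j = 1, ..., n, be i.i.d. triples of random variables with finite alphabets, each distributed according to a pmf p(x,y,z) satisfying the Markov chain Y - X - Z (Y and Z conditionally independent given X). Let T_1 = f_1(Y^n) for a deterministic function f_1. Then for every 1 ≤ i ≤ n, the Markov chain Z^{i-1} - (T_1, X^{i-1}, Z_i^n) - (Y_i, X_i) holds, i.e., Z^{i-1} and the pair (Y_i, X_i) are conditionally independent given (T_1, X^{i-1}, Z_i^n). -/

import Mathlib

open scoped Classical
open Finset

/-- Conditional independence of `A` and `C` given `B` for a pmf `P` on a finite sample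
space, in cross-multiplication form: `P(A=a,B=b,C=c) P(B=b) = P(A=a,B=b) P(B=b,C=c)`. -/
def CondIndepPmf {Ω α β γ : Type*} [Fintype Ω]
    (P : Ω → ℝ) (A : Ω → α) (B : Ω → β) (C : Ω → γ) : Prop :=
  ∀ (a : α) (b : β) (c : γ),
    (∑ ω, if A ω = a ∧ B ω = b ∧ C ω = c then P ω else 0) *
      (∑ ω, if B ω = b then P ω else 0) =
    (∑ ω, if A ω = a ∧ B ω = b then P ω else 0) *
      (∑ ω, if B ω = b ∧ C ω = c then P ω else 0)


section merge
variable {𝒵 : Type*} [Fintype 𝒵] {n : ℕ}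

def mergeFn (i : Fin n) (z₁ : {j : Fin n // j < i} → 𝒵) (z₂ : {j : Fin n // i ≤ j} → 𝒵) :
    Fin n → 𝒵 :=
  fun j => if h : j < i then z₁ ⟨j, h⟩ else z₂ ⟨j, le_of_not_gt h⟩

omit [Fintype 𝒵] in
lemma mergeFn_restrict_lt (i : Fin n) (z₁ : {j : Fin n // j < i} → 𝒵)
    (z₂ : {j : Fin n // i ≤ j} → 𝒵) :
    (fun j : {j : Fin n // j < i} => mergeFn i z₁ z₂ j) = z₁ := by
  funext j; simp [mergeFn, j.2]

omit [Fintype 𝒵] in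
lemma mergeFn_restrict_ge (i : Fin n) (z₁ : {j : Fin n // j < i} → 𝒵)
    (z₂ : {j : Fin n // i ≤ j} → 𝒵) :
    (fun j : {j : Fin n // i ≤ j} => mergeFn i z₁ z₂ j) = z₂ := by
  funext j
  have h : ¬ (j : Fin n) < i := not_lt.mpr j.2
  simp [mergeFn, h]

omit [Fintype 𝒵] in
lemma mergeFn_coe_lt (i : Fin n) (z₁ : {j : Fin n // j < i} → 𝒵)
    (z₂ : {j : Fin n // i ≤ j} → 𝒵) (j : {j : Fin n // j < i}) :
    mergeFn i z₁ z₂ j = z₁ j := congrFun (mergeFn_restrict_lt i z₁ z₂) j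

omit [Fintype 𝒵] in
lemma mergeFn_coe_ge (i : Fin n) (z₁ : {j : Fin n // j < i} → 𝒵)
    (z₂ : {j : Fin n // i ≤ j} → 𝒵) (j : {j : Fin n // i ≤ j}) :
    mergeFn i z₁ z₂ j = z₂ j := congrFun (mergeFn_restrict_ge i z₁ z₂) j

def mergeEquiv (i : Fin n) :
    (({j : Fin n // j < i} → 𝒵) × ({j : Fin n // i ≤ j} → 𝒵)) ≃ (Fin n → 𝒵) where
  toFun p := mergeFn i p.1 p.2
  invFun z := (fun j => z j, fun j => z j)
  left_inv p := by
    obtain ⟨z₁, z₂⟩ := p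
    simp only [Prod.mk.injEq]
    exact ⟨mergeFn_restrict_lt i z₁ z₂, mergeFn_restrict_ge i z₁ z₂⟩
  right_inv z := by
    funext j
    by_cases h : j < i <;> simp [mergeFn, h]

lemma sum_merge (i : Fin n) (g : (Fin n → 𝒵) → ℝ) :
    ∑ z, g z = ∑ z₁ : {j : Fin n // j < i} → 𝒵, ∑ z₂ : {j : Fin n // i ≤ j} → 𝒵,
      g (mergeFn i z₁ z₂) := by
  rw [← Equiv.sum_comp (mergeEquiv (𝒵 := 𝒵) i) g, Fintype.sum_prod_type]
  rfl

lemma prod_split (i : Fin n) (f : Fin n → ℝ) :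
    ∏ j, f j = (∏ j : {j : Fin n // j < i}, f j) * ∏ j : {j : Fin n // i ≤ j}, f j := by
  rw [← Fintype.prod_subtype_mul_prod_subtype (fun j : Fin n => j < i) f]
  congr 1
  exact (Fintype.prod_equiv (Equiv.subtypeEquivRight fun j : Fin n => not_lt.symm)
    (fun j => f j) (fun j => f j) fun j => rfl).symm

lemma sum_pi_prod {ι : Type*} [Fintype ι] (F : ι → 𝒵 → ℝ) :
    ∑ g : ι → 𝒵, ∏ j, F j (g j) = ∏ j, ∑ z, F j z := by
  rw [Finset.prod_univ_sum, Fintype.piFinset_univ]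

end merge

lemma ite_prop_irrel {α : Sort*} {c d : Prop} {hc : Decidable c} {hd : Decidable d} (h : c ↔ d)
    (x y : α) : (@ite _ c hc x y) = (@ite _ d hd x y) := by
  split_ifs with h1 h2
  · rfl
  · exact absurd (h.mp h1) h2
  · exact absurd (h.mpr ‹d›) h1
  · rfl

lemma ite_sum_zero {α : Type*} {c : Prop} [Decidable c] {s : Finset α} (f : α → ℝ) :
    (∑ x ∈ s, if c then f x else 0) = if c then ∑ x ∈ s, f x else 0 := by
  split_ifs <;> simp

section slices
variable {𝒳 𝒴 𝒵 : Type*} [Fintype 𝒳] [Fintype 𝒴] [Fintype 𝒵] {n : ℕ}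

lemma slice_sum (i : Fin n) (q : 𝒳 × 𝒴 × 𝒵 → ℝ)
    (R : (Fin n → 𝒳) → (Fin n → 𝒴) → ({j : Fin n // i ≤ j} → 𝒵) → Prop)
    (a : {j : Fin n // j < i} → 𝒵) :
    (∑ ω : (Fin n → 𝒳) × (Fin n → 𝒴) × (Fin n → 𝒵),
        if (fun j : {j : Fin n // j < i} => ω.2.2 j) = a ∧
            R ω.1 ω.2.1 (fun j : {j : Fin n // i ≤ j} => ω.2.2 j)
        then (∏ j : {j : Fin n // j < i}, ∑ z, q (ω.1 j, ω.2.1 j, z)) *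
             ∏ j : {j : Fin n // i ≤ j}, q (ω.1 j, ω.2.1 j, ω.2.2 j)
        else 0)
    = ∑ ω : (Fin n → 𝒳) × (Fin n → 𝒴) × (Fin n → 𝒵),
        if R ω.1 ω.2.1 (fun j : {j : Fin n // i ≤ j} => ω.2.2 j)
        then ∏ j, q (ω.1 j, ω.2.1 j, ω.2.2 j) else 0 := by
  simp only [Fintype.sum_prod_type]
  refine Finset.sum_congr rfl fun X _ => Finset.sum_congr rfl fun Y _ => ?_
  trans (∑ z₂ : {j : Fin n // i ≤ j} → 𝒵, if R X Y z₂ then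
      (∏ j : {j : Fin n // j < i}, ∑ z, q (X j, Y j, z)) *
        ∏ j : {j : Fin n // i ≤ j}, q (X j, Y j, z₂ j) else 0)
  · rw [sum_merge i]
    simp only [mergeFn_restrict_lt, mergeFn_restrict_ge, mergeFn_coe_ge]
    simp [ite_and, _root_.ite_sum_zero, Finset.sum_ite_eq']
  · symm
    rw [sum_merge i]
    simp only [mergeFn_restrict_ge]
    have hsplit : ∀ (z₁ : {j : Fin n // j < i} → 𝒵) (z₂ : {j : Fin n // i ≤ j} → 𝒵),
        (∏ j : Fin n, q (X j, Y j, mergeFn i z₁ z₂ j)) =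
          (∏ j : {j : Fin n // j < i}, q (X j, Y j, z₁ j)) *
            ∏ j : {j : Fin n // i ≤ j}, q (X j, Y j, z₂ j) := by
      intro z₁ z₂
      rw [prod_split i]
      congr 1
      · exact Finset.prod_congr rfl fun j _ => by rw [mergeFn_coe_lt]
      · exact Finset.prod_congr rfl fun j _ => by rw [mergeFn_coe_ge]
    simp only [hsplit]
    rw [Finset.sum_comm]
    refine Finset.sum_congr rfl fun z₂ _ => ?_
    by_cases h : R X Y z₂
    · simp only [if_pos h]
      rw [← Finset.sum_mul]
      have hsp := sum_pi_prod (𝒵 := 𝒵) fun (j : {j : Fin n // j < i}) w => q (X j, Y j, w)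
      congr 1
      refine Eq.trans ?_ hsp
      congr!
    · simp only [if_neg h]
      simp

end slices
section mainaux
variable {𝒳 𝒴 𝒵 : Type*} [Fintype 𝒳] [Fintype 𝒴] [Fintype 𝒵] {n : ℕ}

lemma main_aux (i : Fin n) (q : 𝒳 × 𝒴 × 𝒵 → ℝ) (hq0 : ∀ p, 0 ≤ q p)
    (hM : ∀ x y z, q (x, y, z) * (∑ y', ∑ z', q (x, y', z')) =
      (∑ z', q (x, y, z')) * (∑ y', q (x, y', z)))
    (ξ : {j : Fin n // j < i} → 𝒳) (a : {j : Fin n // j < i} → 𝒵)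
    (S T : (Fin n → 𝒳) → (Fin n → 𝒴) → ({j : Fin n // i ≤ j} → 𝒵) → Prop)
    (hS : ∀ X Y z₂, S X Y z₂ → ∀ j : {j : Fin n // j < i}, X j = ξ j)
    (hT : ∀ X Y z₂, T X Y z₂ → ∀ j : {j : Fin n // j < i}, X j = ξ j) :
    (∑ ω : (Fin n → 𝒳) × (Fin n → 𝒴) × (Fin n → 𝒵),
        if (fun j : {j : Fin n // j < i} => ω.2.2 j) = a ∧
            T ω.1 ω.2.1 (fun j : {j : Fin n // i ≤ j} => ω.2.2 j)
          then ∏ j, q (ω.1 j, ω.2.1 j, ω.2.2 j) else 0) *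
      (∑ ω : (Fin n → 𝒳) × (Fin n → 𝒴) × (Fin n → 𝒵),
        if S ω.1 ω.2.1 (fun j : {j : Fin n // i ≤ j} => ω.2.2 j)
          then ∏ j, q (ω.1 j, ω.2.1 j, ω.2.2 j) else 0) =
    (∑ ω : (Fin n → 𝒳) × (Fin n → 𝒴) × (Fin n → 𝒵),
        if (fun j : {j : Fin n // j < i} => ω.2.2 j) = a ∧
            S ω.1 ω.2.1 (fun j : {j : Fin n // i ≤ j} => ω.2.2 j)
          then ∏ j, q (ω.1 j, ω.2.1 j, ω.2.2 j) else 0) *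
      (∑ ω : (Fin n → 𝒳) × (Fin n → 𝒴) × (Fin n → 𝒵),
        if T ω.1 ω.2.1 (fun j : {j : Fin n // i ≤ j} => ω.2.2 j)
          then ∏ j, q (ω.1 j, ω.2.1 j, ω.2.2 j) else 0) := by
  set Qb := ∏ j : {j : Fin n // j < i}, ∑ y', ∑ z', q (ξ j, y', z') with hQb
  set Vb := ∏ j : {j : Fin n // j < i}, ∑ y', q (ξ j, y', a j) with hVb
  have K1 : ∀ ω : (Fin n → 𝒳) × (Fin n → 𝒴) × (Fin n → 𝒵),
      (∀ j : {j : Fin n // j < i}, ω.1 j = ξ j) →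
      (∀ j : {j : Fin n // j < i}, ω.2.2 j = a j) →
      (∏ j, q (ω.1 j, ω.2.1 j, ω.2.2 j)) * Qb =
        Vb * ((∏ j : {j : Fin n // j < i}, ∑ z, q (ω.1 j, ω.2.1 j, z)) *
          ∏ j : {j : Fin n // i ≤ j}, q (ω.1 j, ω.2.1 j, ω.2.2 j)) := by
    rintro ⟨X, Y, Z⟩ hX hZ
    dsimp only at hX hZ ⊢
    rw [prod_split i (fun j => q (X j, Y j, Z j))]
    have h1 : (∏ j : {j : Fin n // j < i}, q (X j, Y j, Z j)) * Qb
        = Vb * ∏ j : {j : Fin n // j < i}, ∑ z, q (X j, Y j, z) := by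
      calc (∏ j : {j : Fin n // j < i}, q (X j, Y j, Z j)) * Qb
          = ∏ j : {j : Fin n // j < i},
              (q (X j, Y j, Z j) * ∑ y', ∑ z', q (X j, y', z')) := by
            rw [hQb, ← Finset.prod_mul_distrib]
            exact Finset.prod_congr rfl fun j _ => by rw [hX j]
        _ = ∏ j : {j : Fin n // j < i},
              ((∑ z', q (X j, Y j, z')) * ∑ y', q (X j, y', Z j)) :=
            Finset.prod_congr rfl fun j _ => hM _ _ _
        _ = (∏ j : {j : Fin n // j < i}, ∑ z', q (X j, Y j, z')) *
              ∏ j : {j : Fin n // j < i}, ∑ y', q (X j, y', Z j) :=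
            Finset.prod_mul_distrib
        _ = Vb * ∏ j : {j : Fin n // j < i}, ∑ z, q (X j, Y j, z) := by
            rw [hVb, mul_comm]
            congr 1
            exact Finset.prod_congr rfl fun j _ => by rw [hX j, hZ j]
    linear_combination (∏ j : {j : Fin n // i ≤ j}, q (X j, Y j, Z j)) * h1
  have K4 : (∑ ω : (Fin n → 𝒳) × (Fin n → 𝒴) × (Fin n → 𝒵),
        if (fun j : {j : Fin n // j < i} => ω.2.2 j) = a ∧
            T ω.1 ω.2.1 (fun j : {j : Fin n // i ≤ j} => ω.2.2 j)
          then ∏ j, q (ω.1 j, ω.2.1 j, ω.2.2 j) else 0) * Qb =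
      Vb * ∑ ω : (Fin n → 𝒳) × (Fin n → 𝒴) × (Fin n → 𝒵),
        if T ω.1 ω.2.1 (fun j : {j : Fin n // i ≤ j} => ω.2.2 j)
          then ∏ j, q (ω.1 j, ω.2.1 j, ω.2.2 j) else 0 := by
    rw [← slice_sum i q T a, Finset.sum_mul, Finset.mul_sum]
    refine Finset.sum_congr rfl fun ω _ => ?_
    by_cases h : (fun j : {j : Fin n // j < i} => ω.2.2 j) = a ∧
        T ω.1 ω.2.1 (fun j : {j : Fin n // i ≤ j} => ω.2.2 j)
    · rw [if_pos h, if_pos h]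
      exact K1 ω (hT _ _ _ h.2) (fun j => congrFun h.1 j)
    · rw [if_neg h, if_neg h, zero_mul, mul_zero]
  have K5 : (∑ ω : (Fin n → 𝒳) × (Fin n → 𝒴) × (Fin n → 𝒵),
        if (fun j : {j : Fin n // j < i} => ω.2.2 j) = a ∧
            S ω.1 ω.2.1 (fun j : {j : Fin n // i ≤ j} => ω.2.2 j)
          then ∏ j, q (ω.1 j, ω.2.1 j, ω.2.2 j) else 0) * Qb =
      Vb * ∑ ω : (Fin n → 𝒳) × (Fin n → 𝒴) × (Fin n → 𝒵),
        if S ω.1 ω.2.1 (fun j : {j : Fin n // i ≤ j} => ω.2.2 j)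
          then ∏ j, q (ω.1 j, ω.2.1 j, ω.2.2 j) else 0 := by
    rw [← slice_sum i q S a, Finset.sum_mul, Finset.mul_sum]
    refine Finset.sum_congr rfl fun ω _ => ?_
    by_cases h : (fun j : {j : Fin n // j < i} => ω.2.2 j) = a ∧
        S ω.1 ω.2.1 (fun j : {j : Fin n // i ≤ j} => ω.2.2 j)
    · rw [if_pos h, if_pos h]
      exact K1 ω (hS _ _ _ h.2) (fun j => congrFun h.1 j)
    · rw [if_neg h, if_neg h, zero_mul, mul_zero]
  by_cases hQ : Qb = 0
  · obtain ⟨j₀, -, hj₀⟩ := Finset.prod_eq_zero_iff.mp (hQb ▸ hQ)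
    have hq00 : ∀ y z, q (ξ j₀, y, z) = 0 := by
      intro y z
      have h1 := (Finset.sum_eq_zero_iff_of_nonneg
        (fun y' _ => Finset.sum_nonneg fun z' _ => hq0 _)).mp hj₀ y (Finset.mem_univ y)
      exact (Finset.sum_eq_zero_iff_of_nonneg (fun z' _ => hq0 _)).mp h1 z (Finset.mem_univ z)
    have hz : ∀ ω : (Fin n → 𝒳) × (Fin n → 𝒴) × (Fin n → 𝒵),
        (∀ j : {j : Fin n // j < i}, ω.1 j = ξ j) →
        (∏ j, q (ω.1 j, ω.2.1 j, ω.2.2 j)) = 0 := by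
      intro ω hω
      refine Finset.prod_eq_zero (Finset.mem_univ (j₀ : Fin n)) ?_
      rw [hω j₀]
      exact hq00 _ _
    have hL1 : (∑ ω : (Fin n → 𝒳) × (Fin n → 𝒴) × (Fin n → 𝒵),
        if (fun j : {j : Fin n // j < i} => ω.2.2 j) = a ∧
            T ω.1 ω.2.1 (fun j : {j : Fin n // i ≤ j} => ω.2.2 j)
          then ∏ j, q (ω.1 j, ω.2.1 j, ω.2.2 j) else 0) = 0 := by
      refine Finset.sum_eq_zero fun ω _ => ?_
      split_ifs with h
      · exact hz ω (hT _ _ _ h.2)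
      · rfl
    have hL3 : (∑ ω : (Fin n → 𝒳) × (Fin n → 𝒴) × (Fin n → 𝒵),
        if (fun j : {j : Fin n // j < i} => ω.2.2 j) = a ∧
            S ω.1 ω.2.1 (fun j : {j : Fin n // i ≤ j} => ω.2.2 j)
          then ∏ j, q (ω.1 j, ω.2.1 j, ω.2.2 j) else 0) = 0 := by
      refine Finset.sum_eq_zero fun ω _ => ?_
      split_ifs with h
      · exact hz ω (hS _ _ _ h.2)
      · rfl
    rw [hL1, hL3, zero_mul, zero_mul]
  · apply mul_right_cancel₀ hQ
    linear_combination (∑ ω : (Fin n → 𝒳) × (Fin n → 𝒴) × (Fin n → 𝒵),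
        if S ω.1 ω.2.1 (fun j : {j : Fin n // i ≤ j} => ω.2.2 j)
          then ∏ j, q (ω.1 j, ω.2.1 j, ω.2.2 j) else 0) * K4 -
      (∑ ω : (Fin n → 𝒳) × (Fin n → 𝒴) × (Fin n → 𝒵),
        if T ω.1 ω.2.1 (fun j : {j : Fin n // i ≤ j} => ω.2.2 j)
          then ∏ j, q (ω.1 j, ω.2.1 j, ω.2.2 j) else 0) * K5

end mainaux
/-- For i.i.d. triples `(X_j,Y_j,Z_j) ~ q` with the single-letter Markov chain `Y - X - Z`, and `T₁ = f₁(Yⁿ)`, the Markov chain `Z^{i-1} - (T₁, X^{i-1}, Z_iⁿ) - (Y_i, X_i)` holds. -/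
theorem markov_stmt12
    {𝒳 𝒴 𝒵 : Type*} [Fintype 𝒳] [Fintype 𝒴] [Fintype 𝒵] {n : ℕ}
    (q : 𝒳 × 𝒴 × 𝒵 → ℝ) (hq0 : ∀ a, 0 ≤ q a) (hq1 : ∑ a, q a = 1)
    (hMarkov : CondIndepPmf q (fun a => a.2.1) (fun a => a.1) (fun a => a.2.2))
    {τ₁ : Type*}
    (f1 : (Fin n → 𝒴) → τ₁)
    (i : Fin n) :
    CondIndepPmf
      (fun ω : (Fin n → 𝒳) × (Fin n → 𝒴) × (Fin n → 𝒵) =>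
        ∏ j, q (ω.1 j, ω.2.1 j, ω.2.2 j))
      (fun ω => (fun j : {j : Fin n // j < i} => ω.2.2 j))
      (fun ω => (f1 ω.2.1, (fun j : {j : Fin n // j < i} => ω.1 j), (fun j : {j : Fin n // i ≤ j} => ω.2.2 j)))
      (fun ω => (ω.2.1 i, ω.1 i)) := by
  have hM : ∀ x y z, q (x, y, z) * (∑ y', ∑ z', q (x, y', z')) =
      (∑ z', q (x, y, z')) * (∑ y', q (x, y', z)) := by
    intro x y z
    have h := hMarkov y x z
    dsimp only at h
    have e1 : (∑ p : 𝒳 × 𝒴 × 𝒵, if p.2.1 = y ∧ p.1 = x ∧ p.2.2 = z then q p else 0)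
        = q (x, y, z) := by
      simp only [Fintype.sum_prod_type, ite_and]
      simp only [_root_.ite_sum_zero]
      simp [Finset.sum_ite_eq']
    have e2 : (∑ p : 𝒳 × 𝒴 × 𝒵, if p.1 = x then q p else 0)
        = ∑ y', ∑ z', q (x, y', z') := by
      simp only [Fintype.sum_prod_type]
      rw [Finset.sum_congr rfl fun _ _ => Finset.sum_congr rfl fun _ _ => _root_.ite_sum_zero _]
      simp [Finset.sum_ite_eq']
    have e3 : (∑ p : 𝒳 × 𝒴 × 𝒵, if p.2.1 = y ∧ p.1 = x then q p else 0)
        = ∑ z', q (x, y, z') := by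
      simp only [Fintype.sum_prod_type, ite_and]
      rw [Finset.sum_congr rfl fun _ _ => Finset.sum_congr rfl fun _ _ => _root_.ite_sum_zero _]
      simp [Finset.sum_ite_eq']
      rw [Finset.sum_congr rfl fun _ _ => _root_.ite_sum_zero _]
      simp [Finset.sum_ite_eq']
    have e4 : (∑ p : 𝒳 × 𝒴 × 𝒵, if p.1 = x ∧ p.2.2 = z then q p else 0)
        = ∑ y', q (x, y', z) := by
      simp only [Fintype.sum_prod_type, ite_and]
      simp only [_root_.ite_sum_zero]
      simp [Finset.sum_ite_eq']
    rw [e1, e2, e3, e4] at h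
    exact h
  intro a b c
  obtain ⟨t, ξ, ζ⟩ := b
  obtain ⟨yi, xi⟩ := c
  simp only [Prod.mk.injEq]
  have H := main_aux i q hq0 hM ξ a
    (fun X Y z₂ => f1 Y = t ∧ (fun j : {j : Fin n // j < i} => X j) = ξ ∧ z₂ = ζ)
    (fun X Y z₂ => (f1 Y = t ∧ (fun j : {j : Fin n // j < i} => X j) = ξ ∧ z₂ = ζ) ∧
      (Y i = yi ∧ X i = xi))
    (fun X Y z₂ h j => congrFun h.2.1 j)
    (fun X Y z₂ h j => congrFun h.1.2.1 j)
  convert H using 3 <;> exact ite_prop_irrel Iff.rfl _ _
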